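/- Let (X1, X2) be a random vector with values in (0,∞)² whose margins are standard Fréchet and whose joint CDF is P(X1 ≤ z1, X2 ≤ z2) = exp(−V(z1, z2)) for z1, z2 > 0, where V : (0,∞)² → [0,∞) is continuous. Let η ∈ ℝ, τ > 0 and β a positive integer. For ξ ≠ 0 set Z_ξ(i) = η + τ(X_i^ξ − 1)/ξ and set Z_0(i) = η + τ log(X_i), i = 1, 2. Then for all ξ ≠ 0 sufficiently close to 0 (more precisely, all ξ such that 2βξ(1+ε) < 1 for some ε > 0) the covariance Cov(Z_ξ(1)^β, Z_ξ(2)^β) is finite, and lim_{ξ → 0} Cov(Z_ξ(1)^β, Z_ξ(2)^β) = Cov(Z_0(1)^β, Z_0(2)^β). -/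

import Mathlib

open MeasureTheory

/-- Covariance of two square-integrable real random variables:
`Cov(U,V) = E[UV] - E[U]E[V]`. -/
noncomputable def covar {Ω : Type*} [MeasurableSpace Ω] (P : MeasureTheory.Measure Ω)
    (U V : Ω → ℝ) : ℝ :=
  (∫ ω, U ω * V ω ∂P) - (∫ ω, U ω ∂P) * (∫ ω, V ω ∂P)

def IsStdFrechet {Ω : Type*} [MeasurableSpace Ω] (P : Measure Ω) (X : Ω → ℝ) : Prop :=
  ∀ x : ℝ, P {ω | X ω ≤ x} = if 0 < x then ENNReal.ofReal (Real.exp (-1 / x)) else 0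

namespace Stmt10Aux
open MeasureTheory Real Set Filter


noncomputable def fre (x : ℝ) : ℝ := if 0 < x then Real.exp (-1/x) / x ^ 2 else 0
noncomputable def Fc (x : ℝ) : ℝ := if 0 < x then Real.exp (-1/x) else 0

lemma fre_nonneg (x : ℝ) : 0 ≤ fre x := by
  unfold fre; split
  · positivity
  · exact le_refl _

lemma fre_meas : Measurable fre := by
  unfold fre
  apply Measurable.ite measurableSet_Ioi _ measurable_const
  fun_prop

lemma Fc_nonpos {x : ℝ} (hx : x ≤ 0) : Fc x = 0 := by
  unfold Fc; rw [if_neg (not_lt.2 hx)]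

lemma hasDerivAt_Fc (x : ℝ) : HasDerivAt Fc (fre x) x := by
  rcases lt_trichotomy x 0 with hx | rfl | hx
  · have heq : Fc =ᶠ[nhds x] (fun _ => (0:ℝ)) := by
      filter_upwards [Iio_mem_nhds hx] with y hy
      exact Fc_nonpos (le_of_lt hy)
    have h0 : HasDerivAt (fun _ : ℝ => (0:ℝ)) 0 x := hasDerivAt_const x 0
    have : HasDerivAt Fc 0 x := h0.congr_of_eventuallyEq heq
    simpa [fre, not_lt.2 hx.le] using this
  · rw [show fre 0 = 0 by simp [fre]]
    rw [hasDerivAt_iff_tendsto_slope]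
    have hslope : ∀ y : ℝ, slope Fc 0 y = Fc y / y := by
      intro y; simp [slope_def_field, Fc_nonpos (le_refl (0:ℝ))]
    apply Tendsto.congr (fun y => (hslope y).symm)
    rw [← nhdsLT_sup_nhdsGT (0:ℝ), tendsto_sup]
    constructor
    · apply Tendsto.congr' _ tendsto_const_nhds
      filter_upwards [self_mem_nhdsWithin] with y (hy : y < 0)
      simp [Fc_nonpos hy.le]
    · have key : Tendsto (fun y : ℝ => y⁻¹ * Real.exp (-y⁻¹)) (nhdsWithin 0 (Ioi 0)) (nhds 0) := by
        have h1 : Tendsto (fun y : ℝ => y⁻¹) (nhdsWithin 0 (Ioi 0)) atTop :=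
          tendsto_inv_nhdsGT_zero
        have h2 : Tendsto (fun t : ℝ => t * Real.exp (-t)) atTop (nhds 0) := by
          simpa using tendsto_pow_mul_exp_neg_atTop_nhds_zero 1
        exact h2.comp h1
      apply key.congr'
      filter_upwards [self_mem_nhdsWithin] with y (hy : 0 < y)
      unfold Fc
      rw [if_pos hy, neg_div, one_div]
      ring
  · have h1 : HasDerivAt (fun y : ℝ => -1/y) (1 / x ^ 2) x := by
      have := (hasDerivAt_inv (ne_of_gt hx)).neg
      have h2 : -(-(x^2)⁻¹) = 1 / x^2 := by rw [neg_neg, one_div]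
      simpa [neg_div, one_div, h2, Pi.neg_def] using this
    have hF : HasDerivAt (fun y : ℝ => Real.exp (-1/y)) (Real.exp (-1/x) / x ^ 2) x := by
      have := h1.exp
      simpa [div_eq_mul_inv, mul_comm] using this
    have heq : Fc =ᶠ[nhds x] (fun y => Real.exp (-1/y)) := by
      filter_upwards [Ioi_mem_nhds hx] with y hy
      unfold Fc; rw [if_pos (mem_Ioi.mp hy)]
    have hFc : HasDerivAt Fc (Real.exp (-1/x) / x ^ 2) x := hF.congr_of_eventuallyEq heq
    simpa [fre, if_pos hx] using hFc





lemma fre_pos_eq {x : ℝ} (hx : 0 < x) : fre x = Real.exp (-1/x) / x ^ 2 := if_pos hx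
lemma fre_nonpos_eq {x : ℝ} (hx : x ≤ 0) : fre x = 0 := if_neg (not_lt.2 hx)

lemma integrableOn_rpow_mul_fre {q : ℝ} (hq : q < 1) :
    IntegrableOn (fun x => x ^ q * fre x) (Ioi 0) := by
  have hgam : IntegrableOn (fun y => Real.exp (-y) * y ^ (-q)) (Ioi (0:ℝ)) := by
    have := Real.GammaIntegral_convergent (s := 1 - q) (by linarith)
    simpa using this
  have hsub := (integrableOn_Ioi_comp_rpow_iff'
    (fun y => Real.exp (-y) * y ^ (-q)) (p := (-1:ℝ)) (by norm_num)).mpr hgam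
  refine (integrableOn_congr_fun (fun x hx => ?_) measurableSet_Ioi).mp hsub
  have hx : (0:ℝ) < x := hx
  rw [smul_eq_mul, fre_pos_eq hx]
  rw [show ((-1:ℝ) - 1) = (-2:ℝ) by norm_num]
  rw [Real.rpow_neg_one]
  have e1 : (x⁻¹) ^ (-q) = x ^ q := by
    rw [← Real.rpow_neg_one x, ← Real.rpow_mul hx.le]; norm_num
  have e2 : x ^ (-2:ℝ) = (x ^ 2)⁻¹ := by
    rw [show (-2:ℝ) = -((2:ℕ):ℝ) by norm_num, Real.rpow_neg hx.le, Real.rpow_natCast]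
  rw [e1, e2, neg_div, one_div]
  ring

lemma integrableOn_fre_Iic (a : ℝ) : IntegrableOn fre (Iic a) := by
  rcases le_or_gt a 0 with ha | ha
  · apply (integrableOn_zero (s := Iic a)).congr_fun (fun x hx => ?_) measurableSet_Iic
    exact (fre_nonpos_eq (le_trans hx ha)).symm
  · have h1 : IntegrableOn fre (Iic 0) := by
      apply (integrableOn_zero (s := Iic (0:ℝ))).congr_fun (fun x hx => ?_) measurableSet_Iic
      exact (fre_nonpos_eq hx).symm
    have h2 : IntegrableOn fre (Ioi 0) := by
      apply (integrableOn_rpow_mul_fre (q := 0) one_pos).congr_fun (fun x hx => ?_) measurableSet_Ioi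
      rw [Real.rpow_zero, one_mul]
    exact ((h1.union h2).mono_set (by rw [Iic_union_Ioi]; exact subset_univ _))

lemma integrable_fre : Integrable fre := by
  rw [← integrableOn_univ, ← Iic_union_Ioi (a := (0:ℝ))]
  refine (integrableOn_fre_Iic 0).union ?_
  apply (integrableOn_rpow_mul_fre (q := 0) one_pos).congr_fun (fun x hx => ?_) measurableSet_Ioi
  rw [Real.rpow_zero, one_mul]

/-- the standard Fréchet distribution as a measure on ℝ -/
noncomputable def nu : Measure ℝ := (volume : Measure ℝ).withDensity (fun x => ENNReal.ofReal (fre x))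

lemma nu_Iic (a : ℝ) :
    nu (Iic a) = if 0 < a then ENNReal.ofReal (Real.exp (-1 / a)) else 0 := by
  have h1 : nu (Iic a) = ∫⁻ x in Iic a, ENNReal.ofReal (fre x) := by
    rw [nu, withDensity_apply _ measurableSet_Iic]
  have h2 : ENNReal.ofReal (∫ x in Iic a, fre x) = ∫⁻ x in Iic a, ENNReal.ofReal (fre x) :=
    ofReal_integral_eq_lintegral_ofReal (integrableOn_fre_Iic a)
      (ae_of_all _ fun x => fre_nonneg x)
  have h3 : ∫ x in Iic a, fre x = Fc a - 0 := by
    apply integral_Iic_of_hasDerivAt_of_tendsto' (fun x _ => hasDerivAt_Fc x)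
      (integrableOn_fre_Iic a)
    apply Tendsto.congr' _ (tendsto_const_nhds (α := ℝ))
    filter_upwards [eventually_le_atBot (0:ℝ)] with x hx
    exact (Fc_nonpos hx).symm
  rw [h1, ← h2, h3, sub_zero]
  unfold Fc
  split
  · rfl
  · simp

lemma map_eq {Ω : Type*} [MeasurableSpace Ω] (P : Measure Ω) [IsProbabilityMeasure P]
    (X : Ω → ℝ) (hX : Measurable X)
    (hF : ∀ x : ℝ, P {ω | X ω ≤ x} = if 0 < x then ENNReal.ofReal (Real.exp (-1 / x)) else 0) :
    P.map X = nu := by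
  have : IsProbabilityMeasure (P.map X) := Measure.isProbabilityMeasure_map hX.aemeasurable
  refine Measure.ext_of_Iic (P.map X) nu (fun a => ?_)
  rw [Measure.map_apply hX measurableSet_Iic, nu_Iic]
  exact hF a

lemma integrable_nu_rpow {q : ℝ} (hq : q < 1) : Integrable (fun x : ℝ => x ^ q) nu := by
  rw [nu, integrable_withDensity_iff fre_meas.ennreal_ofReal
    (ae_of_all _ fun x => ENNReal.ofReal_lt_top)]
  have hfe : (fun x : ℝ => x ^ q * (ENNReal.ofReal (fre x)).toReal) = fun x => x ^ q * fre x :=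
    funext fun x => by rw [ENNReal.toReal_ofReal (fre_nonneg x)]
  rw [hfe, ← integrableOn_univ, ← Iic_union_Ioi (a := (0:ℝ))]
  refine IntegrableOn.union ?_ (integrableOn_rpow_mul_fre hq)
  apply (integrableOn_zero (s := Iic (0:ℝ))).congr_fun (fun x hx => ?_) measurableSet_Iic
  rw [fre_nonpos_eq hx, mul_zero]

lemma comp_integrable {Ω : Type*} [MeasurableSpace Ω] {P : Measure Ω} {X : Ω → ℝ}
    (hX : Measurable X) (hmap : P.map X = nu) {g : ℝ → ℝ} (hg : Measurable g)
    (hgi : Integrable g nu) : Integrable (fun ω => g (X ω)) P := by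
  rw [← hmap] at hgi
  exact (integrable_map_measure hg.aestronglyMeasurable hX.aemeasurable).mp hgi



lemma abs_exp_sub_one_le' (t : ℝ) : |Real.exp t - 1| ≤ |t| * Real.exp |t| := by
  rcases le_or_gt 0 t with h | h
  · rw [abs_of_nonneg h, abs_of_nonneg (sub_nonneg.2 (Real.one_le_exp h))]
    have hmul : Real.exp t * Real.exp (-t) = 1 := by rw [← Real.exp_add]; simp
    nlinarith [Real.add_one_le_exp (-t), Real.exp_pos t]
  · rw [abs_of_neg h, abs_of_nonpos (sub_nonpos.2 (Real.exp_lt_one_iff.mpr h).le)]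
    nlinarith [Real.add_one_le_exp t, Real.one_le_exp (neg_nonneg.2 h.le)]

lemma exp_abs_log_le {x : ℝ} (hx : 0 < x) {d : ℝ} : Real.exp (d * |Real.log x|) ≤ x ^ d + x ^ (-d) := by
  rcases le_or_gt 0 (Real.log x) with h | h
  · rw [abs_of_nonneg h]
    have h1 : Real.exp (d * Real.log x) = x ^ d := by rw [Real.rpow_def_of_pos hx, mul_comm]
    rw [h1]
    exact le_add_of_nonneg_right (Real.rpow_pos_of_pos hx _).le
  · rw [abs_of_neg h]
    have h1 : Real.exp (d * -Real.log x) = x ^ (-d) := by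
      rw [Real.rpow_def_of_pos hx]; ring_nf
    rw [h1]
    exact le_add_of_nonneg_left (Real.rpow_pos_of_pos hx _).le

lemma key_bound {x : ℝ} (hx : 0 < x) {ξ d : ℝ} (hξ : ξ ≠ 0) (hle : |ξ| ≤ d) :
    |(x ^ ξ - 1) / ξ| ≤ |Real.log x| * (x ^ d + x ^ (-d)) := by
  rw [abs_div, div_le_iff₀ (abs_pos.2 hξ)]
  have h1 : x ^ ξ = Real.exp (ξ * Real.log x) := by rw [Real.rpow_def_of_pos hx, mul_comm]
  rw [h1]
  calc |Real.exp (ξ * Real.log x) - 1| ≤ |ξ * Real.log x| * Real.exp |ξ * Real.log x| :=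
        abs_exp_sub_one_le' _
    _ ≤ (|ξ| * |Real.log x|) * Real.exp (d * |Real.log x|) := by
        rw [abs_mul]
        apply mul_le_mul_of_nonneg_left _ (by positivity)
        apply Real.exp_le_exp.2
        exact mul_le_mul_of_nonneg_right hle (abs_nonneg _)
    _ ≤ (|ξ| * |Real.log x|) * (x ^ d + x ^ (-d)) := by
        apply mul_le_mul_of_nonneg_left (exp_abs_log_le hx) (by positivity)
    _ = |Real.log x| * (x ^ d + x ^ (-d)) * |ξ| := by ring

lemma log_abs_le_rpow {x : ℝ} (hx : 0 < x) {d : ℝ} (hd : 0 < d) :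
    |Real.log x| ≤ (x ^ d + x ^ (-d)) / d := by
  rw [le_div_iff₀ hd]
  rcases le_or_gt 1 x with h | h
  · rw [abs_of_nonneg (Real.log_nonneg h)]
    have h1 : Real.log x * d = Real.log (x ^ d) := by
      rw [Real.log_rpow hx]; ring
    rw [h1]
    have h2 := Real.log_le_sub_one_of_pos (Real.rpow_pos_of_pos hx d)
    have h3 := (Real.rpow_pos_of_pos hx (-d)).le
    linarith
  · rw [abs_of_neg (Real.log_neg hx h)]
    have h1 : -Real.log x * d = Real.log (x ^ (-d)) := by
      rw [Real.log_rpow hx]; ring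
    rw [h1]
    have h2 := Real.log_le_sub_one_of_pos (Real.rpow_pos_of_pos hx (-d))
    have h3 := (Real.rpow_pos_of_pos hx d).le
    linarith

lemma one_le_sum_rpow {x : ℝ} (hx : 0 < x) {d : ℝ} (hd : 0 ≤ d) : 1 ≤ x ^ d + x ^ (-d) := by
  rcases le_or_gt 1 x with h | h
  · have := Real.one_le_rpow h hd
    have := (Real.rpow_pos_of_pos hx (-d)).le
    linarith
  · have h1 : 1 ≤ x ^ (-d) := by
      rw [Real.rpow_neg hx.le]
      rw [one_le_inv_iff₀]
      exact ⟨Real.rpow_pos_of_pos hx d, Real.rpow_le_one hx.le h.le hd⟩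
    have := (Real.rpow_pos_of_pos hx d).le
    linarith

lemma sq_sum_rpow_le {x : ℝ} (hx : 0 < x) {d : ℝ} :
    (x ^ d + x ^ (-d)) ^ 2 ≤ 2 * (x ^ (2*d) + x ^ (-(2*d))) := by
  have hab : x ^ d * x ^ (-d) = 1 := by
    rw [← Real.rpow_add hx]; simp
  have ha2 : (x ^ d) ^ 2 = x ^ (2*d) := by
    rw [← Real.rpow_natCast (x ^ d) 2, ← Real.rpow_mul hx.le]; norm_num; ring_nf
  have hb2 : (x ^ (-d)) ^ 2 = x ^ (-(2*d)) := by
    rw [← Real.rpow_natCast (x ^ (-d)) 2, ← Real.rpow_mul hx.le]; norm_num; ring_nf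
  have key : 2 ≤ x ^ (2*d) + x ^ (-(2*d)) := by
    have hu : 0 < x ^ (2*d) := Real.rpow_pos_of_pos hx _
    have hinv : x ^ (-(2*d)) = (x ^ (2*d))⁻¹ := by rw [Real.rpow_neg hx.le]
    rw [hinv]
    have h2 : 0 ≤ (x ^ (2*d) - 1)^2 * (x ^ (2*d))⁻¹ := by positivity
    have h3 : x ^ (2*d) + (x ^ (2*d))⁻¹ - 2 = (x ^ (2*d) - 1)^2 * (x ^ (2*d))⁻¹ := by
      field_simp
      ring
    linarith
  nlinarith [ha2, hb2, hab]

lemma add_pow_le' {a b : ℝ} (ha : 0 ≤ a) (hb : 0 ≤ b) (n : ℕ) :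
    (a + b) ^ n ≤ 2 ^ n * (a ^ n + b ^ n) := by
  calc (a + b) ^ n ≤ (2 * max a b) ^ n := by
        apply pow_le_pow_left₀ (by positivity)
        rcases max_cases a b with ⟨he, _⟩ | ⟨he, hle⟩ <;> rw [he] <;> linarith
    _ = 2 ^ n * (max a b) ^ n := mul_pow 2 _ n
    _ ≤ 2 ^ n * (a ^ n + b ^ n) := by
        apply mul_le_mul_of_nonneg_left _ (by positivity)
        rcases max_cases a b with ⟨he, _⟩ | ⟨he, _⟩ <;> rw [he] <;>
          [exact le_add_of_nonneg_right (pow_nonneg hb n);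
           exact le_add_of_nonneg_left (pow_nonneg ha n)]




lemma rpow_pow {x : ℝ} (hx : 0 < x) (a : ℝ) (m : ℕ) : (x ^ a) ^ m = x ^ (a * m) := by
  rw [← Real.rpow_natCast (x ^ a) m, ← Real.rpow_mul hx.le]

lemma master1 {x : ℝ} (hx : 0 < x) {d : ℝ} (hd : 0 < d) {c τ : ℝ} (hc : 0 ≤ c) (hτ : 0 ≤ τ)
    (m : ℕ) :
    (c + τ * (|Real.log x| * (x ^ d + x ^ (-d)))) ^ m
      ≤ (c + 2*τ/d) ^ m * 2 ^ m * (x ^ (2*d*(m:ℝ)) + x ^ (-(2*d*(m:ℝ)))) := by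
  set S := x ^ d + x ^ (-d) with hS
  set T := x ^ (2*d) + x ^ (-(2*d)) with hT
  have hSnn : 0 ≤ S := by positivity
  have hT1 : 1 ≤ T := one_le_sum_rpow hx (by positivity)
  have hW : |Real.log x| * S ≤ (2/d) * T := by
    calc |Real.log x| * S ≤ (S/d) * S := mul_le_mul_of_nonneg_right (log_abs_le_rpow hx hd) hSnn
      _ = S^2 / d := by ring
      _ ≤ (2*T) / d := by
          gcongr
          exact sq_sum_rpow_le hx
      _ = (2/d) * T := by ring
  have hbase : c + τ * (|Real.log x| * S) ≤ (c + 2*τ/d) * T := by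
    have h1 : c ≤ c * T := le_mul_of_one_le_right hc hT1
    have h2 : τ * (|Real.log x| * S) ≤ τ * ((2/d) * T) := mul_le_mul_of_nonneg_left hW hτ
    have : τ * ((2/d)*T) = (2*τ/d) * T := by ring
    rw [this] at h2
    calc c + τ * (|Real.log x| * S) ≤ c * T + (2*τ/d) * T := add_le_add h1 h2
      _ = (c + 2*τ/d) * T := by ring
  have hbnn : 0 ≤ c + τ * (|Real.log x| * S) := by positivity
  calc (c + τ * (|Real.log x| * S)) ^ m ≤ ((c + 2*τ/d) * T) ^ m :=
        pow_le_pow_left₀ hbnn hbase m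
    _ = (c + 2*τ/d) ^ m * T ^ m := mul_pow _ _ m
    _ ≤ (c + 2*τ/d) ^ m * (2 ^ m * ((x ^ (2*d)) ^ m + (x ^ (-(2*d))) ^ m)) := by
        apply mul_le_mul_of_nonneg_left _ (by positivity)
        exact add_pow_le' (by positivity) (by positivity) m
    _ = (c + 2*τ/d) ^ m * 2 ^ m * (x ^ (2*d*(m:ℝ)) + x ^ (-(2*d*(m:ℝ)))) := by
        rw [rpow_pow hx, rpow_pow hx]
        ring_nf

lemma master2 {x : ℝ} (hx : 0 < x) {ξ : ℝ} (hξ : ξ ≠ 0) {c τ : ℝ} (hc : 0 ≤ c) (hτ : 0 ≤ τ)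
    (m : ℕ) :
    (c + (τ/|ξ|) * (x ^ ξ + 1)) ^ m ≤ (c + τ/|ξ|) ^ m * 2 ^ m * (x ^ (ξ*(m:ℝ)) + 1) := by
  have hxp : (0:ℝ) < x ^ ξ := Real.rpow_pos_of_pos hx ξ
  have htξ : 0 ≤ τ/|ξ| := by positivity
  have hbase : c + (τ/|ξ|) * (x ^ ξ + 1) ≤ (c + τ/|ξ|) * (x ^ ξ + 1) := by
    have h1 : c ≤ c * (x ^ ξ + 1) := le_mul_of_one_le_right hc (by linarith)
    nlinarith
  have hbnn : 0 ≤ c + (τ/|ξ|) * (x ^ ξ + 1) := by positivity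
  calc (c + (τ/|ξ|) * (x ^ ξ + 1)) ^ m ≤ ((c + τ/|ξ|) * (x ^ ξ + 1)) ^ m :=
        pow_le_pow_left₀ hbnn hbase m
    _ = (c + τ/|ξ|) ^ m * (x ^ ξ + 1) ^ m := mul_pow _ _ m
    _ ≤ (c + τ/|ξ|) ^ m * (2 ^ m * ((x ^ ξ) ^ m + 1 ^ m)) := by
        apply mul_le_mul_of_nonneg_left _ (by positivity)
        exact add_pow_le' hxp.le zero_le_one m
    _ = (c + τ/|ξ|) ^ m * 2 ^ m * (x ^ (ξ*(m:ℝ)) + 1) := by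
        rw [rpow_pow hx, one_pow]
        ring

lemma abs_affine_pow_le {η τ u B : ℝ} (hτ : 0 ≤ τ) (hB : |u| ≤ B) (m : ℕ) :
    |(η + τ * u) ^ m| ≤ (|η| + τ * B) ^ m := by
  rw [abs_pow]
  apply pow_le_pow_left₀ (abs_nonneg _)
  calc |η + τ * u| ≤ |η| + |τ * u| := abs_add_le _ _
    _ = |η| + τ * |u| := by rw [abs_mul, abs_of_nonneg hτ]
    _ ≤ |η| + τ * B := by nlinarith

lemma tendsto_Z {x : ℝ} (hx : 0 < x) (η τ : ℝ) (m : ℕ) :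
    Filter.Tendsto (fun ξ : ℝ => (η + τ * (x ^ ξ - 1) / ξ) ^ m) (nhdsWithin 0 {(0:ℝ)}ᶜ)
      (nhds ((η + τ * Real.log x) ^ m)) := by
  have hd : HasDerivAt (fun ξ : ℝ => x ^ ξ) (Real.log x) 0 := by
    have h1 : HasDerivAt (fun ξ : ℝ => ξ * Real.log x) (Real.log x) 0 := by
      simpa using (hasDerivAt_id (0:ℝ)).mul_const (Real.log x)
    have h2 := h1.exp
    have h3 : (fun ξ : ℝ => Real.exp (ξ * Real.log x)) = fun ξ => x ^ ξ := funext fun ξ => by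
      rw [Real.rpow_def_of_pos hx, mul_comm]
    rw [h3] at h2
    simpa using h2
  have hs := hasDerivAt_iff_tendsto_slope.mp hd
  have hslope : Filter.Tendsto (fun ξ : ℝ => (x ^ ξ - 1)/ξ) (nhdsWithin 0 {(0:ℝ)}ᶜ)
      (nhds (Real.log x)) := by
    apply hs.congr
    intro ξ
    simp [slope_def_field, Real.rpow_zero]
  have := (tendsto_const_nhds (x := η) |>.add (tendsto_const_nhds (x := τ) |>.mul hslope)).pow m
  apply this.congr
  intro ξ
  rw [← mul_div_assoc]


lemma avg_bound {A B W1 W2 : ℝ} (m : ℕ) (hW1 : 0 ≤ W1) (hW2 : 0 ≤ W2)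
    (h1 : |A| ≤ W1 ^ m) (h2 : |B| ≤ W2 ^ m) :
    |A * B| ≤ (W1 ^ (2*m) + W2 ^ (2*m)) / 2 := by
  rw [abs_mul]
  have hm := mul_le_mul h1 h2 (abs_nonneg B) (pow_nonneg hW1 m)
  have h3 := two_mul_le_add_sq (W1 ^ m) (W2 ^ m)
  have e1 : (W1 ^ m)^2 = W1 ^ (2*m) := by rw [← pow_mul, mul_comm]
  have e2 : (W2 ^ m)^2 = W2 ^ (2*m) := by rw [← pow_mul, mul_comm]
  linarith

end Stmt10Aux

/-- Let `(X1,X2)` be a positive random vector with standard Fréchet margins and joint CDF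
`exp(-V(z1,z2))` on `(0,∞)²` with `V` continuous. For `ξ ≠ 0` set
`Z_ξ(i) = η + τ(X_i^ξ - 1)/ξ` and `Z_0(i) = η + τ log X_i`. Then for all `ξ ≠ 0` with
`2βξ(1+ε) < 1` for some `ε > 0` the covariance `Cov(Z_ξ(1)^β, Z_ξ(2)^β)` is finite, and
`Cov(Z_ξ(1)^β, Z_ξ(2)^β) → Cov(Z_0(1)^β, Z_0(2)^β)` as `ξ → 0`. -/
theorem stmt10 {Ω : Type*} [MeasurableSpace Ω] (P : Measure Ω) [IsProbabilityMeasure P]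
    (X1 X2 : Ω → ℝ) (hX1 : Measurable X1) (hX2 : Measurable X2)
    (hpos : ∀ ω, 0 < X1 ω ∧ 0 < X2 ω)
    (hF1 : IsStdFrechet P X1) (hF2 : IsStdFrechet P X2)
    (V : ℝ → ℝ → ℝ)
    (hVcont : ContinuousOn (fun p : ℝ × ℝ => V p.1 p.2) (Set.Ioi 0 ×ˢ Set.Ioi 0))
    (hVnn : ∀ z1 > (0 : ℝ), ∀ z2 > (0 : ℝ), 0 ≤ V z1 z2)
    (hcdf : ∀ z1 > (0 : ℝ), ∀ z2 > (0 : ℝ),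
      P {ω | X1 ω ≤ z1 ∧ X2 ω ≤ z2} = ENNReal.ofReal (Real.exp (-V z1 z2)))
    (η τ : ℝ) (hτ : 0 < τ) (β : ℕ) (hβ : 0 < β) :
    (∀ ξ : ℝ, ξ ≠ 0 → (∃ ε > (0 : ℝ), 2 * (β : ℝ) * ξ * (1 + ε) < 1) →
      Integrable (fun ω => (η + τ * (X1 ω ^ ξ - 1) / ξ) ^ β) P ∧
      Integrable (fun ω => (η + τ * (X2 ω ^ ξ - 1) / ξ) ^ β) P ∧
      Integrable (fun ω =>
        (η + τ * (X1 ω ^ ξ - 1) / ξ) ^ β * (η + τ * (X2 ω ^ ξ - 1) / ξ) ^ β) P) ∧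
    Filter.Tendsto (fun ξ : ℝ =>
        covar P (fun ω => (η + τ * (X1 ω ^ ξ - 1) / ξ) ^ β)
          (fun ω => (η + τ * (X2 ω ^ ξ - 1) / ξ) ^ β))
      (nhdsWithin 0 {(0 : ℝ)}ᶜ)
      (nhds (covar P (fun ω => (η + τ * Real.log (X1 ω)) ^ β)
        (fun ω => (η + τ * Real.log (X2 ω)) ^ β))) := by
  have hmap1 : P.map X1 = Stmt10Aux.nu := Stmt10Aux.map_eq P X1 hX1 hF1
  have hmap2 : P.map X2 = Stmt10Aux.nu := Stmt10Aux.map_eq P X2 hX2 hF2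
  have hβ1 : (1:ℝ) ≤ (β:ℝ) := by exact_mod_cast hβ
  have hint : ∀ (X : Ω → ℝ), Measurable X → P.map X = Stmt10Aux.nu → ∀ q : ℝ, q < 1 →
      Integrable (fun ω => X ω ^ q) P := by
    intro X hX hm q hq
    exact Stmt10Aux.comp_integrable hX hm (by fun_prop) (Stmt10Aux.integrable_nu_rpow hq)
  have hmeasZ : ∀ (X : Ω → ℝ), Measurable X → ∀ ξ : ℝ, ∀ m : ℕ,
      AEStronglyMeasurable (fun ω => (η + τ * (X ω ^ ξ - 1) / ξ) ^ m) P := by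
    intro X hX ξ m
    apply Measurable.aestronglyMeasurable
    fun_prop
  constructor
  · -- Part 1: integrability for fixed admissible ξ
    rintro ξ hξ0 ⟨ε, hε, hcond⟩
    have hb0 : (0:ℝ) ≤ (β:ℝ) := Nat.cast_nonneg β
    have hq2 : 2*(β:ℝ)*ξ < 1 := by
      rcases le_or_gt ξ 0 with h | h
      · nlinarith
      · nlinarith [mul_nonneg (mul_nonneg (mul_nonneg (by norm_num : (0:ℝ) ≤ 2) hb0) h.le) hε.le]
    have hq1 : (β:ℝ)*ξ < 1 := by
      rcases le_or_gt ξ 0 with h | h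
      · nlinarith
      · nlinarith [mul_nonneg hb0 h.le]
    -- |Z^m| ≤ W^m with W = |η| + (τ/|ξ|)(x^ξ+1)
    have hW : ∀ x : ℝ, 0 < x → ∀ m : ℕ,
        |(η + τ * (x ^ ξ - 1) / ξ) ^ m| ≤ (|η| + (τ/|ξ|) * (x ^ ξ + 1)) ^ m := by
      intro x hx m
      have h1 : |(x ^ ξ - 1) / ξ| ≤ (x ^ ξ + 1)/|ξ| := by
        rw [abs_div]
        gcongr
        calc |x ^ ξ - 1| ≤ |x ^ ξ| + |(1:ℝ)| := abs_sub _ _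
          _ = x ^ ξ + 1 := by rw [abs_of_pos (Real.rpow_pos_of_pos hx ξ), abs_one]
      have h2 : |(η + τ * (x ^ ξ - 1) / ξ) ^ m| ≤ (|η| + τ * ((x ^ ξ + 1)/|ξ|)) ^ m := by
        rw [mul_div_assoc]
        exact Stmt10Aux.abs_affine_pow_le hτ.le h1 m
      have h3 : |η| + τ * ((x ^ ξ + 1)/|ξ|) = |η| + (τ/|ξ|) * (x ^ ξ + 1) := by ring
      rwa [h3] at h2
    have hWnn : ∀ x : ℝ, 0 < x → 0 ≤ |η| + (τ/|ξ|) * (x ^ ξ + 1) := by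
      intro x hx
      have := Real.rpow_pos_of_pos hx ξ
      have h0 : (0:ℝ) < |ξ| := abs_pos.2 hξ0
      positivity
    have hone : ∀ (X : Ω → ℝ), Measurable X → P.map X = Stmt10Aux.nu → (∀ ω, 0 < X ω) →
        Integrable (fun ω => (η + τ * (X ω ^ ξ - 1) / ξ) ^ β) P := by
      intro X hX hm hp
      apply Integrable.mono'
        (g := fun ω => (|η| + τ/|ξ|)^β * 2^β * ((X ω) ^ (ξ*(β:ℝ)) + 1))
        ((((hint X hX hm (ξ*(β:ℝ)) (by nlinarith)).add (integrable_const 1)).const_mul _))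
        (hmeasZ X hX ξ β)
      apply Filter.Eventually.of_forall
      intro ω
      rw [Real.norm_eq_abs]
      exact (hW (X ω) (hp ω) β).trans
        (Stmt10Aux.master2 (hp ω) hξ0 (abs_nonneg η) hτ.le β)
    refine ⟨hone X1 hX1 hmap1 (fun ω => (hpos ω).1), hone X2 hX2 hmap2 (fun ω => (hpos ω).2), ?_⟩
    -- product
    have he2 : ξ*((2*β : ℕ):ℝ) < 1 := by push_cast; nlinarith
    set C : ℝ := (|η| + τ/|ξ|)^(2*β) * 2^(2*β) with hC
    apply Integrable.mono'
      (g := fun ω => (C * ((X1 ω) ^ (ξ*((2*β:ℕ):ℝ)) + 1) + C * ((X2 ω) ^ (ξ*((2*β:ℕ):ℝ)) + 1))/2)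
      (Integrable.div_const (Integrable.add
        (((hint X1 hX1 hmap1 _ he2).add (integrable_const 1)).const_mul C)
        (((hint X2 hX2 hmap2 _ he2).add (integrable_const 1)).const_mul C)) 2)
      (((hmeasZ X1 hX1 ξ β).mul (hmeasZ X2 hX2 ξ β)))
    apply Filter.Eventually.of_forall
    intro ω
    rw [Real.norm_eq_abs]
    have hb := Stmt10Aux.avg_bound β (hWnn _ (hpos ω).1) (hWnn _ (hpos ω).2)
      (hW (X1 ω) (hpos ω).1 β) (hW (X2 ω) (hpos ω).2 β)
    apply hb.trans
    have hm1 := Stmt10Aux.master2 (x := X1 ω) (hpos ω).1 hξ0 (abs_nonneg η) hτ.le (2*β)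
    have hm2 := Stmt10Aux.master2 (x := X2 ω) (hpos ω).2 hξ0 (abs_nonneg η) hτ.le (2*β)
    rw [hC]
    have := add_le_add hm1 hm2
    linarith [this]
  · -- Part 2: convergence
    have hβ0 : ((β:ℝ)) ≠ 0 := by positivity
    set δ : ℝ := (8*(β:ℝ))⁻¹ with hδdef
    have hδ : 0 < δ := by positivity
    set e1 : ℝ := 2*δ*(β:ℝ) with he1def
    set e2 : ℝ := 2*δ*((2*β:ℕ):ℝ) with he2def
    have he1 : e1 = 1/4 := by
      rw [he1def, hδdef]; field_simp; ring
    have he2 : e2 = 1/2 := by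
      rw [he2def, hδdef]; push_cast; field_simp; ring
    -- dominating bound machinery
    have hWd : ∀ x : ℝ, 0 < x → ∀ ξ : ℝ, ξ ≠ 0 → |ξ| ≤ δ → ∀ m : ℕ,
        |(η + τ * (x ^ ξ - 1) / ξ) ^ m|
          ≤ (|η| + τ * (|Real.log x| * (x ^ δ + x ^ (-δ)))) ^ m := by
      intro x hx ξ hξ0 hle m
      rw [mul_div_assoc]
      exact Stmt10Aux.abs_affine_pow_le hτ.le (Stmt10Aux.key_bound hx hξ0 hle) m
    have hWdnn : ∀ x : ℝ, 0 < x → 0 ≤ |η| + τ * (|Real.log x| * (x ^ δ + x ^ (-δ))) := by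
      intro x hx
      have h1 := Real.rpow_pos_of_pos hx δ
      have h2 := Real.rpow_pos_of_pos hx (-δ)
      positivity
    have hev : ∀ᶠ ξ : ℝ in nhdsWithin 0 {(0:ℝ)}ᶜ, ξ ≠ 0 ∧ |ξ| ≤ δ := by
      have h1 : ∀ᶠ ξ : ℝ in nhdsWithin 0 {(0:ℝ)}ᶜ, ξ ≠ 0 := by
        filter_upwards [self_mem_nhdsWithin] with ξ hξ
        exact hξ
      have h2 : ∀ᶠ ξ : ℝ in nhdsWithin 0 {(0:ℝ)}ᶜ, |ξ| ≤ δ := by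
        apply Filter.Eventually.filter_mono nhdsWithin_le_nhds
        filter_upwards [eventually_abs_sub_lt 0 hδ] with ξ hξ
        rw [sub_zero] at hξ
        exact hξ.le
      exact h1.and h2
    -- the three tendsto statements
    have T1 : ∀ (X : Ω → ℝ), Measurable X → P.map X = Stmt10Aux.nu → (∀ ω, 0 < X ω) →
        Filter.Tendsto (fun ξ : ℝ => ∫ ω, (η + τ * (X ω ^ ξ - 1) / ξ) ^ β ∂P)
          (nhdsWithin 0 {(0:ℝ)}ᶜ)
          (nhds (∫ ω, (η + τ * Real.log (X ω)) ^ β ∂P)) := by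
      intro X hX hm hp
      apply tendsto_integral_filter_of_dominated_convergence
        (bound := fun ω => (|η| + 2*τ/δ)^β * 2^β * ((X ω) ^ e1 + (X ω) ^ (-e1)))
      · exact Filter.Eventually.of_forall (fun ξ => hmeasZ X hX ξ β)
      · filter_upwards [hev] with ξ hξ
        apply Filter.Eventually.of_forall
        intro ω
        rw [Real.norm_eq_abs]
        exact (hWd (X ω) (hp ω) ξ hξ.1 hξ.2 β).trans
          (Stmt10Aux.master1 (hp ω) hδ (abs_nonneg η) hτ.le β)
      · exact (((hint X hX hm e1 (by rw [he1]; norm_num)).add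
          (hint X hX hm (-e1) (by rw [he1]; norm_num))).const_mul _)
      · exact Filter.Eventually.of_forall (fun ω => Stmt10Aux.tendsto_Z (hp ω) η τ β)
    have T3 : Filter.Tendsto (fun ξ : ℝ =>
          ∫ ω, (η + τ * (X1 ω ^ ξ - 1) / ξ) ^ β * (η + τ * (X2 ω ^ ξ - 1) / ξ) ^ β ∂P)
        (nhdsWithin 0 {(0:ℝ)}ᶜ)
        (nhds (∫ ω, (η + τ * Real.log (X1 ω)) ^ β * (η + τ * Real.log (X2 ω)) ^ β ∂P)) := by
      set C2 : ℝ := (|η| + 2*τ/δ)^(2*β) * 2^(2*β) with hC2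
      apply tendsto_integral_filter_of_dominated_convergence
        (bound := fun ω => (C2 * ((X1 ω) ^ e2 + (X1 ω) ^ (-e2))
          + C2 * ((X2 ω) ^ e2 + (X2 ω) ^ (-e2)))/2)
      · exact Filter.Eventually.of_forall
          (fun ξ => (hmeasZ X1 hX1 ξ β).mul (hmeasZ X2 hX2 ξ β))
      · filter_upwards [hev] with ξ hξ
        apply Filter.Eventually.of_forall
        intro ω
        rw [Real.norm_eq_abs]
        have hb := Stmt10Aux.avg_bound β (hWdnn _ (hpos ω).1) (hWdnn _ (hpos ω).2)
          (hWd (X1 ω) (hpos ω).1 ξ hξ.1 hξ.2 β) (hWd (X2 ω) (hpos ω).2 ξ hξ.1 hξ.2 β)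
        apply hb.trans
        have hm1 := Stmt10Aux.master1 (x := X1 ω) (hpos ω).1 hδ (abs_nonneg η) hτ.le (2*β)
        have hm2 := Stmt10Aux.master1 (x := X2 ω) (hpos ω).2 hδ (abs_nonneg η) hτ.le (2*β)
        rw [hC2]
        rw [← he2def] at hm1 hm2
        linarith [add_le_add hm1 hm2]
      · apply Integrable.div_const
        apply Integrable.add
        · exact (((hint X1 hX1 hmap1 e2 (by rw [he2]; norm_num)).add
            (hint X1 hX1 hmap1 (-e2) (by rw [he2]; norm_num))).const_mul _)
        · exact (((hint X2 hX2 hmap2 e2 (by rw [he2]; norm_num)).add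
            (hint X2 hX2 hmap2 (-e2) (by rw [he2]; norm_num))).const_mul _)
      · exact Filter.Eventually.of_forall (fun ω =>
          (Stmt10Aux.tendsto_Z (hpos ω).1 η τ β).mul (Stmt10Aux.tendsto_Z (hpos ω).2 η τ β))
    simp only [covar]
    exact T3.sub ((T1 X1 hX1 hmap1 (fun ω => (hpos ω).1)).mul
      (T1 X2 hX2 hmap2 (fun ω => (hpos ω).2)))
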